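/- Let λ be a partition inside an n×k rectangle and set a_i = λ_i + n - i for 1 ≤ i ≤ n. Then the determinant of q-binomial coefficients det[ qbinom(k+i, j+λ_{n-j})_q ]_{i,j=0}^{n-1} equals q^{‖λ̄‖} · (∏_{m=0}^{n-1} [k+m]_q!) · (∏_{1≤i<j≤n} [a_i - a_j]_q) / (∏_{i=1}^{n} [a_i]_q! · [k+n-1-a_i]_q!), where ‖λ̄‖ = Σ_{i=1}^{n} (i-1)·(k - λ_{n+1-i}) is the weighted size of the complement partition. -/

import Mathlib

open Finset

noncomputable section

/-- The generic variable `q`, as a rational function over `ℚ`. -/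
def q : RatFunc ℚ := RatFunc.X

/-- The `q`-integer `[m]_q = 1 + q + ⋯ + q^{m-1}`. -/
def qint (m : ℕ) : RatFunc ℚ := ∑ i ∈ Finset.range m, q ^ i

/-- The `q`-factorial `[m]_q!`. -/
def qfact (m : ℕ) : RatFunc ℚ := ∏ i ∈ Finset.range m, qint (i + 1)

/-- The Gaussian binomial coefficient, `0` outside the valid range. -/
def qbinom (a b : ℕ) : RatFunc ℚ :=
  if b ≤ a then qfact a / (qfact b * qfact (a - b)) else 0

lemma q_pow_sub_one_ne (m : ℕ) (hm : 0 < m) : q ^ m - 1 ≠ 0 := by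
  have : q ^ m - 1 = algebraMap (Polynomial ℚ) (RatFunc ℚ) (Polynomial.X ^ m - 1) := by
    rw [map_sub, map_pow, map_one]; rfl
  rw [this]
  apply RatFunc.algebraMap_ne_zero
  intro h
  have := congrArg (Polynomial.eval 0) h
  simp [Polynomial.eval_pow, zero_pow hm.ne'] at this

lemma q_sub_one_ne : q - 1 ≠ 0 := by
  have := q_pow_sub_one_ne 1 one_pos
  simpa using this

lemma qint_mul (m : ℕ) : qint m * (q - 1) = q ^ m - 1 := geom_sum_mul q m

lemma qint_ne (m : ℕ) (hm : 0 < m) : qint m ≠ 0 := by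
  intro h
  have := qint_mul m
  rw [h, zero_mul] at this
  exact q_pow_sub_one_ne m hm this.symm

lemma qfact_ne (m : ℕ) : qfact m ≠ 0 := by
  refine Finset.prod_ne_zero_iff.mpr fun i _ => qint_ne _ (Nat.succ_pos i)

lemma qfact_split {u v : ℕ} (h : u ≤ v) :
    qfact v = qfact u * ∏ r ∈ Finset.range (v - u), qint (u + r + 1) := by
  rw [qfact, qfact, ← Finset.prod_range_mul_prod_Ico _ h, Finset.prod_Ico_eq_prod_range]

lemma entry (k n i b : ℕ) (hin : i < n) (hb : b ≤ k + n - 1) :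
    qbinom (k + i) b * (qfact b * qfact (k + n - 1 - b)) * (q - 1) ^ (n - 1 - i)
        * q ^ ((n - 1) * b)
      = qfact (k + i) * (q ^ b) ^ i * ∏ s ∈ Finset.Ico (i + 1) n, (q ^ (k + s) - q ^ b) := by
  by_cases hbi : b ≤ k + i
  · rw [qbinom, if_pos hbi]
    have h1 : qfact (k + n - 1 - b)
        = qfact (k + i - b) * ∏ r ∈ Finset.range (n - 1 - i), qint (k + i - b + r + 1) := by
      have h := qfact_split (u := k + i - b) (v := k + n - 1 - b) (by omega)
      rwa [show k + n - 1 - b - (k + i - b) = n - 1 - i by omega] at h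
    have h2 : ∏ s ∈ Finset.Ico (i + 1) n, (q ^ (k + s) - q ^ b)
        = ∏ r ∈ Finset.range (n - 1 - i), (q ^ (k + i + 1 + r) - q ^ b) := by
      rw [Finset.prod_Ico_eq_prod_range]
      apply Finset.prod_congr (by congr 1; omega)
      intro r _
      congr 2
      omega
    have key : (∏ r ∈ Finset.range (n - 1 - i), qint (k + i - b + r + 1))
          * (q - 1) ^ (n - 1 - i) * (q ^ b) ^ (n - 1 - i)
        = ∏ r ∈ Finset.range (n - 1 - i), (q ^ (k + i + 1 + r) - q ^ b) := by
      have e1 : (q - 1) ^ (n - 1 - i) = ∏ _r ∈ Finset.range (n - 1 - i), (q - 1) := by simp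
      have e2 : (q ^ b) ^ (n - 1 - i) = ∏ _r ∈ Finset.range (n - 1 - i), q ^ b := by simp
      rw [e1, e2, ← Finset.prod_mul_distrib, ← Finset.prod_mul_distrib]
      refine Finset.prod_congr rfl fun r _ => ?_
      calc qint (k + i - b + r + 1) * (q - 1) * q ^ b
          = (q ^ (k + i - b + r + 1) - 1) * q ^ b := by rw [qint_mul]
        _ = q ^ (k + i + 1 + r) - q ^ b := by
            rw [sub_mul, one_mul, ← pow_add]
            congr 2
            omega
    have h3 : q ^ ((n - 1) * b) = q ^ (b * i) * (q ^ b) ^ (n - 1 - i) := by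
      rw [← pow_mul, ← pow_add]
      congr 1
      have h5 : n - 1 - i + i = n - 1 := by omega
      conv_lhs => rw [← h5]
      ring
    rw [h1, h2, ← key, h3, pow_mul]
    have hfb := qfact_ne b
    have hfib := qfact_ne (k + i - b)
    field_simp
  · rw [qbinom, if_neg hbi]
    rw [Finset.prod_eq_zero (i := b - k) (by rw [Finset.mem_Ico]; omega)
      (by rw [show k + (b - k) = b by omega, sub_self])]
    simp

open Polynomial in
lemma det_eval (n : ℕ) (c : ℕ → RatFunc ℚ) (z : Fin n → RatFunc ℚ) :
    Matrix.det (Matrix.of fun i j : Fin n =>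
        (z j) ^ (i : ℕ) * ∏ s ∈ Finset.Ico ((i : ℕ) + 1) n, (c s - z j))
      = (∏ i : Fin n, ∏ s ∈ Finset.Ico ((i : ℕ) + 1) n, c s)
        * ∏ i : Fin n, ∏ j ∈ Finset.Ioi i, (z j - z i) := by
  set p : Fin n → Polynomial (RatFunc ℚ) := fun i =>
    X ^ (i : ℕ) * ∏ s ∈ Finset.Ico ((i : ℕ) + 1) n, (C (c s) - X) with hp
  have hdeg : ∀ i : Fin n, (p i).natDegree < n := by
    intro i
    simp only [hp]
    have h1 : (∏ s ∈ Finset.Ico ((i : ℕ) + 1) n, (C (c s) - X)).natDegree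
        ≤ n - ((i : ℕ) + 1) := by
      refine le_trans (Polynomial.natDegree_prod_le _ _) ?_
      refine le_trans (Finset.sum_le_card_nsmul _ _ 1 fun s _ => ?_) (by simp)
      exact le_trans (Polynomial.natDegree_sub_le _ _) (by simp)
    have h2 := Polynomial.natDegree_mul_le (p := (X : Polynomial (RatFunc ℚ)) ^ (i : ℕ))
      (q := ∏ s ∈ Finset.Ico ((i : ℕ) + 1) n, (C (c s) - X))
    have h3 : ((X : Polynomial (RatFunc ℚ)) ^ (i : ℕ)).natDegree ≤ (i : ℕ) :=
      le_of_eq (Polynomial.natDegree_X_pow _)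
    have := i.isLt
    omega
  have heval : ∀ i j : Fin n,
      (z j) ^ (i : ℕ) * ∏ s ∈ Finset.Ico ((i : ℕ) + 1) n, (c s - z j) = (p i).eval (z j) := by
    intro i j
    rw [hp]
    simp [Polynomial.eval_prod]
  set C' : Matrix (Fin n) (Fin n) (RatFunc ℚ) :=
    Matrix.of fun i m : Fin n => (p i).coeff (m : ℕ) with hC'
  set V : Matrix (Fin n) (Fin n) (RatFunc ℚ) :=
    Matrix.of fun m j : Fin n => (z j) ^ (m : ℕ) with hV
  have hsplit : (Matrix.of fun i j : Fin n =>
      (z j) ^ (i : ℕ) * ∏ s ∈ Finset.Ico ((i : ℕ) + 1) n, (c s - z j)) = C' * V := by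
    ext i j
    rw [Matrix.mul_apply]
    simp only [Matrix.of_apply, hC', hV]
    rw [heval i j, Polynomial.eval_eq_sum_range' (hdeg i) (z j)]
    rw [← Fin.sum_univ_eq_sum_range (fun m => (p i).coeff m * (z j) ^ m) n]
  have htri : C'.BlockTriangular id := by
    intro i j hij
    simp only [hC', Matrix.of_apply, hp]
    rw [Polynomial.coeff_X_pow_mul']
    rw [if_neg (by exact Nat.not_le.mpr hij)]
  have hdiag : ∀ i : Fin n, C' i i = ∏ s ∈ Finset.Ico ((i : ℕ) + 1) n, c s := by
    intro i
    simp only [hC', Matrix.of_apply, hp]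
    rw [Polynomial.coeff_X_pow_mul']
    rw [if_pos le_rfl, Nat.sub_self, Polynomial.coeff_zero_eq_eval_zero, Polynomial.eval_prod]
    simp
  have hVdet : V.det = ∏ i : Fin n, ∏ j ∈ Finset.Ioi i, (z j - z i) := by
    have h : V = (Matrix.vandermonde z).transpose := by
      ext m j
      simp [hV, Matrix.vandermonde, Matrix.transpose_apply]
    rw [h, Matrix.det_transpose, Matrix.det_vandermonde]
  rw [hsplit, Matrix.det_mul, Matrix.det_of_upperTriangular htri, hVdet]
  congr 1
  exact Finset.prod_congr rfl fun i _ => hdiag i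

lemma prod_Ioi_rev {M : Type*} [CommMonoid M] {n : ℕ} (f : Fin n → Fin n → M) :
    ∏ i : Fin n, ∏ j ∈ Finset.Ioi i, f i j
      = ∏ i : Fin n, ∏ j ∈ Finset.Ioi i, f j.rev i.rev := by
  rw [Finset.prod_sigma', Finset.prod_sigma']
  refine Finset.prod_nbij' (fun p => ⟨p.2.rev, p.1.rev⟩) (fun p => ⟨p.2.rev, p.1.rev⟩)
    ?_ ?_ ?_ ?_ ?_
  · rintro ⟨a, c⟩ h
    simp only [Finset.mem_sigma, Finset.mem_univ, Finset.mem_Ioi, true_and] at h ⊢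
    exact Fin.rev_lt_rev.mpr h
  · rintro ⟨a, c⟩ h
    simp only [Finset.mem_sigma, Finset.mem_univ, Finset.mem_Ioi, true_and] at h ⊢
    exact Fin.rev_lt_rev.mpr h
  · rintro ⟨a, c⟩ _
    simp [Fin.rev_rev]
  · rintro ⟨a, c⟩ _
    simp [Fin.rev_rev]
  · rintro ⟨a, c⟩ _
    simp [Fin.rev_rev]

lemma sum_Ico_swap (n : ℕ) (f : ℕ → ℕ) :
    ∑ i ∈ Finset.range n, ∑ s ∈ Finset.Ico (i + 1) n, f s
      = ∑ s ∈ Finset.range n, s * f s := by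
  have h1 : ∀ i, ∑ s ∈ Finset.Ico (i + 1) n, f s
      = ∑ s ∈ Finset.range n, if i + 1 ≤ s then f s else 0 := by
    intro i
    rw [show Finset.Ico (i + 1) n = (Finset.range n).filter (fun s => i + 1 ≤ s) by
      ext s; simp only [Finset.mem_Ico, Finset.mem_filter, Finset.mem_range]; omega]
    rw [Finset.sum_filter]
  simp_rw [h1]
  rw [Finset.sum_comm]
  refine Finset.sum_congr rfl fun s hs => ?_
  rw [← Finset.sum_filter]
  have hs' : s < n := Finset.mem_range.mp hs
  rw [show (Finset.range n).filter (fun i => i + 1 ≤ s) = Finset.range s by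
    ext i; simp only [Finset.mem_filter, Finset.mem_range]; omega]
  rw [Finset.sum_const, Finset.card_range, smul_eq_mul]


/-- For a partition `λ` (`0`-indexed: `l i = λ_{i+1}`) inside an `n × k` rectangle,
with `a_i = λ_i + n - i`:
`det[ qbinom(k+i, j+λ_{n-j}) ] = q^{‖λ̄‖} ∏_m [k+m]! ∏_{i<j} [a_i - a_j] / ∏_i [a_i]! [k+n-1-a_i]!`,
where `‖λ̄‖ = Σ_{i=1}^n (i-1)(k - λ_{n+1-i})`. -/
theorem stmt1 (n k : ℕ) (l : Fin n → ℕ)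
    (hl : ∀ i j : Fin n, i ≤ j → l j ≤ l i) (hbd : ∀ i, l i ≤ k) :
    Matrix.det (Matrix.of fun i j : Fin n => qbinom (k + (i : ℕ)) ((j : ℕ) + l j.rev))
      = q ^ (∑ i : Fin n, (i : ℕ) * (k - l i.rev))
        * (∏ m ∈ Finset.range n, qfact (k + m))
        * (∏ i : Fin n, ∏ j ∈ Finset.Ioi i,
            qint ((l i + (n - 1 - (i : ℕ))) - (l j + (n - 1 - (j : ℕ)))))
        / (∏ i : Fin n,
            qfact (l i + (n - 1 - (i : ℕ)))
              * qfact (k + n - 1 - (l i + (n - 1 - (i : ℕ))))) := by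
  rcases Nat.eq_zero_or_pos n with hn | hn
  · subst hn
    simp [Matrix.det_fin_zero]
  have hq0 : q ≠ 0 := RatFunc.X_ne_zero
  set b : Fin n → ℕ := fun j => (j : ℕ) + l j.rev with hbdef
  have hrevval : ∀ i : Fin n, (i.rev : ℕ) = n - 1 - (i : ℕ) := by
    intro i; rw [Fin.val_rev]; omega
  have hbbd : ∀ j : Fin n, b j ≤ k + n - 1 := by
    intro j; have h1 := hbd j.rev; have h2 := j.isLt; simp only [hbdef]; omega
  have hbmono : ∀ i j : Fin n, i < j → b i < b j := by
    intro i j hij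
    have h1 : l i.rev ≤ l j.rev := hl j.rev i.rev (Fin.rev_le_rev.mpr hij.le)
    have h2 : (i : ℕ) < (j : ℕ) := hij
    simp only [hbdef]; omega
  have hbrev : ∀ i : Fin n, b i.rev = l i + (n - 1 - (i : ℕ)) := by
    intro i
    simp only [hbdef, Fin.rev_rev, hrevval i]
    omega
  set rr : Fin n → RatFunc ℚ := fun i => (q - 1) ^ (n - 1 - (i : ℕ)) with hrr
  set cc : Fin n → RatFunc ℚ := fun j =>
    qfact (b j) * qfact (k + n - 1 - b j) * q ^ ((n - 1) * b j) with hcc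
  have hrne : (∏ i : Fin n, rr i) ≠ 0 :=
    Finset.prod_ne_zero_iff.mpr fun i _ => pow_ne_zero _ q_sub_one_ne
  have hcne : (∏ j : Fin n, cc j) ≠ 0 := by
    refine Finset.prod_ne_zero_iff.mpr fun j _ => ?_
    exact mul_ne_zero (mul_ne_zero (qfact_ne _) (qfact_ne _)) (pow_ne_zero _ hq0)
  have hHne : (∏ i : Fin n,
      qfact (l i + (n - 1 - (i : ℕ)))
        * qfact (k + n - 1 - (l i + (n - 1 - (i : ℕ))))) ≠ 0 :=
    Finset.prod_ne_zero_iff.mpr fun i _ => mul_ne_zero (qfact_ne _) (qfact_ne _)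
  -- step A: two evaluations of the scaled determinant
  have w1 : Matrix.det (Matrix.of fun i j : Fin n =>
        rr i * (cc j * qbinom (k + (i : ℕ)) ((j : ℕ) + l j.rev)))
      = (∏ i : Fin n, rr i) * ((∏ j : Fin n, cc j)
          * Matrix.det (Matrix.of fun i j : Fin n => qbinom (k + (i : ℕ)) ((j : ℕ) + l j.rev))) := by
    calc Matrix.det (Matrix.of fun i j : Fin n =>
          rr i * (cc j * qbinom (k + (i : ℕ)) ((j : ℕ) + l j.rev)))
        = (∏ i : Fin n, rr i) * Matrix.det (Matrix.of fun i j : Fin n =>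
            cc j * qbinom (k + (i : ℕ)) ((j : ℕ) + l j.rev)) :=
          Matrix.det_mul_column rr _
      _ = (∏ i : Fin n, rr i) * ((∏ j : Fin n, cc j)
          * Matrix.det (Matrix.of fun i j : Fin n => qbinom (k + (i : ℕ)) ((j : ℕ) + l j.rev))) :=
          congrArg _ (Matrix.det_mul_row cc _)
  have w2 : Matrix.det (Matrix.of fun i j : Fin n =>
        rr i * (cc j * qbinom (k + (i : ℕ)) ((j : ℕ) + l j.rev)))
      = (∏ i : Fin n, qfact (k + (i : ℕ)))
        * ((∏ i : Fin n, ∏ s ∈ Finset.Ico ((i : ℕ) + 1) n, q ^ (k + s))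
           * ∏ i : Fin n, ∏ j ∈ Finset.Ioi i, (q ^ (b j) - q ^ (b i))) := by
    have hEq : (Matrix.of fun i j : Fin n =>
          rr i * (cc j * qbinom (k + (i : ℕ)) ((j : ℕ) + l j.rev)))
        = Matrix.of fun i j : Fin n =>
            qfact (k + (i : ℕ)) * ((q ^ (b j)) ^ (i : ℕ)
              * ∏ s ∈ Finset.Ico ((i : ℕ) + 1) n, (q ^ (k + s) - q ^ (b j))) := by
      ext i j
      simp only [Matrix.of_apply, hrr, hcc]
      have he := entry k n i (b j) i.isLt (hbbd j)
      linear_combination he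
    calc Matrix.det (Matrix.of fun i j : Fin n =>
          rr i * (cc j * qbinom (k + (i : ℕ)) ((j : ℕ) + l j.rev)))
        = Matrix.det (Matrix.of fun i j : Fin n =>
            qfact (k + (i : ℕ)) * ((q ^ (b j)) ^ (i : ℕ)
              * ∏ s ∈ Finset.Ico ((i : ℕ) + 1) n, (q ^ (k + s) - q ^ (b j)))) := by rw [hEq]
      _ = (∏ i : Fin n, qfact (k + (i : ℕ)))
          * Matrix.det (Matrix.of fun i j : Fin n => (q ^ (b j)) ^ (i : ℕ)
              * ∏ s ∈ Finset.Ico ((i : ℕ) + 1) n, (q ^ (k + s) - q ^ (b j))) :=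
          Matrix.det_mul_column _ _
      _ = (∏ i : Fin n, qfact (k + (i : ℕ)))
          * ((∏ i : Fin n, ∏ s ∈ Finset.Ico ((i : ℕ) + 1) n, q ^ (k + s))
             * ∏ i : Fin n, ∏ j ∈ Finset.Ioi i, (q ^ (b j) - q ^ (b i))) :=
          congrArg _ (det_eval n (fun s => q ^ (k + s)) (fun j => q ^ (b j)))
  -- abbreviations for target pieces
  have hE1 : (∏ i : Fin n, ∏ s ∈ Finset.Ico ((i : ℕ) + 1) n, q ^ (k + s))
      = q ^ (∑ i : Fin n, ∑ s ∈ Finset.Ico ((i : ℕ) + 1) n, (k + s)) := by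
    calc (∏ i : Fin n, ∏ s ∈ Finset.Ico ((i : ℕ) + 1) n, q ^ (k + s))
        = ∏ i : Fin n, q ^ (∑ s ∈ Finset.Ico ((i : ℕ) + 1) n, (k + s)) :=
          Finset.prod_congr rfl fun i _ => Finset.prod_pow_eq_pow_sum _ _ _
      _ = q ^ (∑ i : Fin n, ∑ s ∈ Finset.Ico ((i : ℕ) + 1) n, (k + s)) :=
          Finset.prod_pow_eq_pow_sum _ _ _
  have hE2 : (∏ i : Fin n, ∏ j ∈ Finset.Ioi i, (q ^ (b j) - q ^ (b i)))
      = q ^ (∑ i : Fin n, b i * (n - 1 - (i : ℕ)))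
        * ((∏ i : Fin n, rr i)
          * ∏ i : Fin n, ∏ j ∈ Finset.Ioi i,
              qint ((l i + (n - 1 - (i : ℕ))) - (l j + (n - 1 - (j : ℕ))))) := by
    have hterm : ∀ i : Fin n, ∀ j ∈ Finset.Ioi i,
        q ^ (b j) - q ^ (b i) = q ^ (b i) * (qint (b j - b i) * (q - 1)) := by
      intro i j hj
      have hij : i < j := Finset.mem_Ioi.mp hj
      have h1 : b i ≤ b j := (hbmono i j hij).le
      rw [qint_mul, mul_sub, mul_one, ← pow_add, Nat.add_sub_cancel' h1]
    rw [Finset.prod_congr rfl fun i _ => Finset.prod_congr rfl (hterm i)]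
    have hsplit : ∀ i : Fin n, ∏ j ∈ Finset.Ioi i, (q ^ (b i) * (qint (b j - b i) * (q - 1)))
        = q ^ (b i * (n - 1 - (i : ℕ)))
          * ((∏ j ∈ Finset.Ioi i, qint (b j - b i)) * rr i) := by
      intro i
      rw [Finset.prod_mul_distrib, Finset.prod_mul_distrib, Finset.prod_const,
        Finset.prod_const, Fin.card_Ioi, ← pow_mul, hrr]
    rw [Finset.prod_congr rfl fun i _ => hsplit i, Finset.prod_mul_distrib,
      Finset.prod_mul_distrib, Finset.prod_pow_eq_pow_sum]
    have hG : (∏ i : Fin n, ∏ j ∈ Finset.Ioi i, qint (b j - b i))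
        = ∏ i : Fin n, ∏ j ∈ Finset.Ioi i,
            qint ((l i + (n - 1 - (i : ℕ))) - (l j + (n - 1 - (j : ℕ)))) := by
      rw [prod_Ioi_rev (f := fun i j => qint (b j - b i))]
      refine Finset.prod_congr rfl fun i _ => Finset.prod_congr rfl fun j _ => ?_
      rw [hbrev i, hbrev j]
    rw [hG]
    ring
  have hccprod : (∏ j : Fin n, cc j)
      = (∏ i : Fin n, qfact (l i + (n - 1 - (i : ℕ)))
          * qfact (k + n - 1 - (l i + (n - 1 - (i : ℕ)))))
        * q ^ ((n - 1) * ∑ j : Fin n, b j) := by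
    simp only [hcc]
    rw [Finset.prod_mul_distrib]
    congr 1
    · calc (∏ j : Fin n, qfact (b j) * qfact (k + n - 1 - b j))
          = ∏ i : Fin n, (qfact (b i.rev) * qfact (k + n - 1 - b i.rev)) := by
            exact (Equiv.prod_comp (Fin.revPerm) fun i => qfact (b i) * qfact (k + n - 1 - b i)).symm
        _ = ∏ i : Fin n, qfact (l i + (n - 1 - (i : ℕ)))
            * qfact (k + n - 1 - (l i + (n - 1 - (i : ℕ)))) :=
            Finset.prod_congr rfl fun i _ => by rw [hbrev i]
    · rw [Finset.prod_pow_eq_pow_sum, Finset.mul_sum]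
  have hexp : (∑ i : Fin n, (i : ℕ) * (k - l i.rev)) + (n - 1) * (∑ j : Fin n, b j)
      = (∑ i : Fin n, ∑ s ∈ Finset.Ico ((i : ℕ) + 1) n, (k + s))
        + ∑ i : Fin n, b i * (n - 1 - (i : ℕ)) := by
    have hSc : (∑ i : Fin n, ∑ s ∈ Finset.Ico ((i : ℕ) + 1) n, (k + s))
        = ∑ i : Fin n, (i : ℕ) * (k + (i : ℕ)) := by
      rw [Fin.sum_univ_eq_sum_range (fun i => ∑ s ∈ Finset.Ico (i + 1) n, (k + s)),
        sum_Ico_swap, ← Fin.sum_univ_eq_sum_range (fun s => s * (k + s))]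
    rw [hSc, Finset.mul_sum, ← Finset.sum_add_distrib, ← Finset.sum_add_distrib]
    refine Finset.sum_congr rfl fun i _ => ?_
    have h1 : l i.rev ≤ k := hbd i.rev
    have h2 : (i : ℕ) < n := i.isLt
    simp only [hbdef]
    obtain ⟨x, hx⟩ : ∃ x, k = l i.rev + x := ⟨k - l i.rev, by omega⟩
    obtain ⟨d, hd⟩ : ∃ d, n - 1 = (i : ℕ) + d := ⟨n - 1 - (i : ℕ), by omega⟩
    rw [hx, hd]
    simp only [Nat.add_sub_cancel_left]
    ring
  -- final assembly
  have w3 : (∏ i : Fin n, qfact (k + (i : ℕ)))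
        * ((∏ i : Fin n, ∏ s ∈ Finset.Ico ((i : ℕ) + 1) n, q ^ (k + s))
           * ∏ i : Fin n, ∏ j ∈ Finset.Ioi i, (q ^ (b j) - q ^ (b i)))
      = (∏ i : Fin n, rr i) * ((∏ j : Fin n, cc j)
          * (q ^ (∑ i : Fin n, (i : ℕ) * (k - l i.rev))
            * (∏ m ∈ Finset.range n, qfact (k + m))
            * (∏ i : Fin n, ∏ j ∈ Finset.Ioi i,
                qint ((l i + (n - 1 - (i : ℕ))) - (l j + (n - 1 - (j : ℕ)))))
            / (∏ i : Fin n,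
                qfact (l i + (n - 1 - (i : ℕ)))
                  * qfact (k + n - 1 - (l i + (n - 1 - (i : ℕ))))))) := by
    rw [hE1, hE2, hccprod]
    rw [← Fin.prod_univ_eq_prod_range (fun m => qfact (k + m)) n]
    have e1 : q ^ (∑ i : Fin n, ∑ s ∈ Finset.Ico ((i : ℕ) + 1) n, (k + s))
          * q ^ (∑ i : Fin n, b i * (n - 1 - (i : ℕ)))
        = q ^ (∑ i : Fin n, (i : ℕ) * (k - l i.rev)) * q ^ ((n - 1) * ∑ j : Fin n, b j) := by
      rw [← pow_add, ← pow_add, ← hexp]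
    field_simp
    linear_combination (∏ i : Fin n, qfact (k + (i : ℕ)))
      * (∏ i : Fin n, ∏ j ∈ Finset.Ioi i,
          qint ((l i + (n - 1 - (i : ℕ))) - (l j + (n - 1 - (j : ℕ)))))
      * e1
  have w4 := w1.symm.trans (w2.trans w3)
  exact mul_left_cancel₀ hcne (mul_left_cancel₀ hrne w4)

end
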